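/- arXiv:1812.00081 — 2 statements merged into one kernel-verified Lean document; each statement's English description precedes it below -/
import Mathlib

section
/- Let ρ' be the symmetric measure with dρ'(x,y) = q(x)q(y) dρ(x,y) for a positive Borel function q, and let Δ, Δ' be the Laplacians Δ(f)(x)=∫(f(x)−f(y)) dρ_x(y), Δ'(f)(x)=∫(f(x)−f(y)) dρ'_x(y). Then Δ'(f) = c·q·f·(P(q)−q) + q·Δ(q·f); in particular, if P(q)=q then Δ'(f) = q·Δ(q·f). -/
open MeasureTheory
open scoped ENNReal

/-- With dρ'_x(y) = q(x)q(y) dρ_x(y), the Laplacians satisfy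
Δ'(f) = c·q·f·(P(q) − q) + q·Δ(q·f); in particular, if P(q) = q then Δ'(f) = q·Δ(q·f).
Here Δ(g)(x) = ∫(g(x) − g(y)) dρ_x(y), c(x) = ρ_x(V), P(g)(x) = c(x)⁻¹ ∫ g dρ_x. -/
theorem laplacian_of_equivalent_measure
    {V : Type*} [MeasurableSpace V]
    (κ : V → Measure V) (q f : V → ℝ) (x : V)
    (hfin : κ x Set.univ ≠ ⊤)
    (hc0 : (κ x Set.univ).toReal ≠ 0)
    (hq : Integrable q (κ x))
    (hf : Integrable f (κ x))
    (hqf : Integrable (fun y => q y * f y) (κ x)) :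
    (∫ y, (f x - f y) * (q x * q y) ∂(κ x)
      = (κ x Set.univ).toReal * q x * f x
          * (((κ x Set.univ).toReal)⁻¹ * ∫ y, q y ∂(κ x) - q x)
        + q x * ∫ y, (q x * f x - q y * f y) ∂(κ x))
    ∧ (((κ x Set.univ).toReal)⁻¹ * ∫ y, q y ∂(κ x) = q x →
        ∫ y, (f x - f y) * (q x * q y) ∂(κ x)
          = q x * ∫ y, (q x * f x - q y * f y) ∂(κ x)) := by
  have : IsFiniteMeasure (κ x) := ⟨lt_top_iff_ne_top.2 hfin⟩
  set c : ℝ := (κ x Set.univ).toReal with hc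
  have hIconst : ∀ a : ℝ, ∫ _ : V, a ∂(κ x) = c * a := by
    intro a; rw [integral_const, smul_eq_mul]; rfl
  have h1 : ∫ y, (f x - f y) * (q x * q y) ∂(κ x)
      = q x * f x * (∫ y, q y ∂(κ x)) - q x * (∫ y, q y * f y ∂(κ x)) := by
    have : ∀ y, (f x - f y) * (q x * q y)
        = q x * f x * q y - q x * (q y * f y) := by intro y; ring
    simp_rw [this]
    rw [integral_sub ((hq.const_mul _)) (hqf.const_mul _),
      integral_const_mul, integral_const_mul]
  have h2 : ∫ y, (q x * f x - q y * f y) ∂(κ x)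
      = c * (q x * f x) - ∫ y, q y * f y ∂(κ x) := by
    rw [integral_sub (integrable_const _) hqf, hIconst]
  constructor
  · rw [h1, h2]; field_simp; ring
  · intro hP
    have hq' : ∫ y, q y ∂(κ x) = c * q x := by
      field_simp at hP; linarith [hP]
    rw [h1, h2, hq']; ring
end

section
/- Let ρ be a symmetric irreducible measure on V×V and consider the graph whose vertices are measurable sets of finite positive μ-measure, with an edge between A and B iff ρ(A×B) > 0. Then any two such sets A, B are connected by a finite path: there exist A_0=A, A_1, …, A_n with ρ(A_i × A_{i+1}) > 0 for all i and ρ(A_n × B) > 0. -/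
open MeasureTheory
open scoped ENNReal

/-- Iterated kernel: k⁰(x,A) = χ_A(x), kⁿ⁺¹(x,A) = ∫ kⁿ(y,A) dk(x,y). -/
noncomputable def kiter {V : Type*} [MeasurableSpace V] (κ : V → Measure V) :
    ℕ → V → Set V → ℝ≥0∞
  | 0, x, A => Set.indicator A (fun _ => (1 : ℝ≥0∞)) x
  | n + 1, x, A => ∫⁻ y, kiter κ n y A ∂(κ x)

lemma kiter_measurable {V : Type*} [MeasurableSpace V] {κ : V → Measure V}
    (hmeas : ∀ B : Set V, MeasurableSet B → Measurable fun x => κ x B)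
    (n : ℕ) {C : Set V} (hC : MeasurableSet C) :
    Measurable fun x => kiter κ n x C := by
  have hκ : Measurable κ := Measure.measurable_of_measurable_coe κ hmeas
  induction n with
  | zero => exact measurable_one.indicator hC
  | succ n ih => exact (Measure.measurable_lintegral ih).comp hκ

lemma setLIntegral_pos' {V : Type*} [MeasurableSpace V] (μ : Measure V) {f : V → ℝ≥0∞}
    {A : Set V} (hf : Measurable f) (hA0 : 0 < μ A) (h : ∀ x ∈ A, 0 < f x) :
    0 < ∫⁻ x in A, f x ∂μ := by
  rw [lintegral_pos_iff_support hf]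
  calc 0 < μ A := hA0
    _ = μ.restrict A A := by rw [Measure.restrict_apply_self]
    _ ≤ μ.restrict A (Function.support f) := measure_mono fun x hx => (h x hx).ne'

lemma path_aux {V : Type*} [MeasurableSpace V] (μ : Measure V) [SigmaFinite μ]
    (ρ : Measure (V × V)) (κ : V → Measure V)
    (hmeas : ∀ B : Set V, MeasurableSet B → Measurable fun x => κ x B)
    (hdis : ∀ A B : Set V, MeasurableSet A → MeasurableSet B →
      ρ (A ×ˢ B) = ∫⁻ x in A, κ x B ∂μ)
    (hsym : ∀ A B : Set V, MeasurableSet A → MeasurableSet B →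
      ρ (A ×ˢ B) = ρ (B ×ˢ A))
    (B : Set V) (hB : MeasurableSet B) :
    ∀ (n : ℕ) (A' : Set V), MeasurableSet A' → 0 < μ A' → μ A' < ⊤ →
      (∀ x ∈ A', 0 < kiter κ (n + 1) x B) →
      ∃ (m : ℕ) (F : ℕ → Set V),
        F 0 = A'
        ∧ (∀ i, MeasurableSet (F i))
        ∧ (∀ i ≤ m, 0 < μ (F i) ∧ μ (F i) < ⊤)
        ∧ (∀ i < m, 0 < ρ (F i ×ˢ F (i + 1)))
        ∧ 0 < ρ (F m ×ˢ B) := by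
  intro n
  induction n with
  | zero =>
    intro A' hA' hA'0 hA'fin hk
    refine ⟨0, fun _ => A', rfl, fun _ => hA', fun i _ => ⟨hA'0, hA'fin⟩, fun i hi => absurd hi (Nat.not_lt_zero i), ?_⟩
    rw [hdis A' B hA' hB]
    refine setLIntegral_pos' μ (hmeas B hB) hA'0 fun x hx => ?_
    have := hk x hx
    simpa [kiter, lintegral_indicator hB, Measure.restrict_apply] using this
  | succ n ih =>
    intro A' hA' hA'0 hA'fin hk
    set C : Set V := {y | 0 < kiter κ (n + 1) y B} with hCdef
    have hC : MeasurableSet C :=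
      measurableSet_lt measurable_const (kiter_measurable hmeas (n + 1) hB)
    -- κ x C > 0 for x ∈ A'
    have hκC : ∀ x ∈ A', 0 < κ x C := by
      intro x hx
      have h1 : 0 < ∫⁻ y, kiter κ (n + 1) y B ∂(κ x) := hk x hx
      rw [lintegral_pos_iff_support (kiter_measurable hmeas (n + 1) hB)] at h1
      refine h1.trans_le (measure_mono fun y hy => ?_)
      exact pos_iff_ne_zero.mpr hy
    have hρAC : 0 < ρ (A' ×ˢ C) := by
      rw [hdis A' C hA' hC]
      exact setLIntegral_pos' μ (hmeas C hC) hA'0 hκC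
    -- restrict C to a finite-measure piece
    obtain ⟨k, hk0⟩ : ∃ k, 0 < ρ (A' ×ˢ (C ∩ spanningSets μ k)) := by
      by_contra h
      push_neg at h
      have hsub : A' ×ˢ C ⊆ ⋃ k, A' ×ˢ (C ∩ spanningSets μ k) := by
        rintro ⟨x, y⟩ ⟨hx, hy⟩
        have : y ∈ ⋃ k, spanningSets μ k := by
          rw [iUnion_spanningSets]; trivial
        obtain ⟨k, hk⟩ := Set.mem_iUnion.mp this
        exact Set.mem_iUnion.mpr ⟨k, ⟨hx, hy, hk⟩⟩
      have : ρ (A' ×ˢ C) = 0 := by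
        refine le_antisymm ?_ zero_le
        calc ρ (A' ×ˢ C) ≤ ρ (⋃ k, A' ×ˢ (C ∩ spanningSets μ k)) := measure_mono hsub
          _ ≤ ∑' k, ρ (A' ×ˢ (C ∩ spanningSets μ k)) := measure_iUnion_le _
          _ = 0 := by simp [le_antisymm (h _) zero_le]
      exact hρAC.ne' this
    set C' : Set V := C ∩ spanningSets μ k with hC'def
    have hC' : MeasurableSet C' := hC.inter (measurableSet_spanningSets μ k)
    have hC'fin : μ C' < ⊤ :=
      (measure_mono Set.inter_subset_right).trans_lt (measure_spanningSets_lt_top μ k)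
    have hC'0 : 0 < μ C' := by
      by_contra h
      push_neg at h
      have hz : μ C' = 0 := le_antisymm h zero_le
      have := hk0
      rw [hsym A' C' hA' hC', hdis C' A' hC' hA'] at this
      rw [Measure.restrict_eq_zero.mpr hz] at this
      simp at this
    have hC'k : ∀ y ∈ C', 0 < kiter κ (n + 1) y B := fun y hy => hy.1
    obtain ⟨m, F, hF0, hFm, hFpos, hFedge, hFend⟩ := ih C' hC' hC'0 hC'fin hC'k
    refine ⟨m + 1, fun i => Nat.casesOn i A' F, rfl, ?_, ?_, ?_, hFend⟩
    · intro i; cases i with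
      | zero => exact hA'
      | succ j => exact hFm j
    · intro i hi; cases i with
      | zero => exact ⟨hA'0, hA'fin⟩
      | succ j => exact hFpos j (Nat.succ_le_succ_iff.mp hi)
    · intro i hi; cases i with
      | zero => simpa [hF0] using hk0
      | succ j => exact hFedge j (Nat.succ_lt_succ_iff.mp hi)

/-- For a symmetric irreducible measure ρ on V × V, the graph whose vertices
are the measurable sets of finite positive μ-measure, with an edge between A and B iff
ρ(A×B) > 0, is connected: any two such sets A, B are joined by a finite path
A = A_0, A_1, …, A_n with ρ(A_i × A_{i+1}) > 0 for all i and ρ(A_n × B) > 0. -/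
theorem graph_of_finite_measure_sets_connected
    {V : Type*} [MeasurableSpace V] (μ : Measure V) [SigmaFinite μ]
    (ρ : Measure (V × V)) (κ : V → Measure V)
    (hmeas : ∀ B : Set V, MeasurableSet B → Measurable fun x => κ x B)
    (hdis : ∀ A B : Set V, MeasurableSet A → MeasurableSet B →
      ρ (A ×ˢ B) = ∫⁻ x in A, κ x B ∂μ)
    (hsym : ∀ A B : Set V, MeasurableSet A → MeasurableSet B →
      ρ (A ×ˢ B) = ρ (B ×ˢ A))
    (hcloc : ∀ A : Set V, MeasurableSet A → μ A < ⊤ →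
      ∫⁻ x in A, κ x Set.univ ∂μ < ⊤)
    (hirr : ∀ B : Set V, MeasurableSet B → 0 < μ B →
      ∀ᵐ x ∂μ, ∃ n : ℕ, 1 ≤ n ∧ 0 < kiter κ n x B)
    (A B : Set V)
    (hA : MeasurableSet A) (hA0 : 0 < μ A) (hAfin : μ A < ⊤)
    (hB : MeasurableSet B) (hB0 : 0 < μ B) (hBfin : μ B < ⊤) :
    ∃ (n : ℕ) (F : ℕ → Set V),
      F 0 = A
      ∧ (∀ i, MeasurableSet (F i))
      ∧ (∀ i ≤ n, 0 < μ (F i) ∧ μ (F i) < ⊤)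
      ∧ (∀ i < n, 0 < ρ (F i ×ˢ F (i + 1)))
      ∧ 0 < ρ (F n ×ˢ B) := by
  -- the sets of points reaching B in exactly n+1 steps, inside A
  set D : ℕ → Set V := fun n => A ∩ {x | 0 < kiter κ (n + 1) x B} with hDdef
  have hDmeas : ∀ n, MeasurableSet (D n) := fun n =>
    hA.inter (measurableSet_lt measurable_const (kiter_measurable hmeas (n + 1) hB))
  -- some D n has positive measure
  obtain ⟨n, hDn0⟩ : ∃ n, 0 < μ (D n) := by
    by_contra h
    push_neg at h
    have hDz : μ (⋃ n, D n) = 0 :=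
      measure_iUnion_null fun n => le_antisymm (h n) zero_le
    have hbad : μ {x | ¬ ∃ n : ℕ, 1 ≤ n ∧ 0 < kiter κ n x B} = 0 := by
      have := hirr B hB hB0
      rw [MeasureTheory.ae_iff] at this
      exact this
    have hdiff : μ (A \ ⋃ n, D n) = 0 := by
      refine measure_mono_null ?_ hbad
      rintro x ⟨hxA, hxU⟩
      intro ⟨m, hm1, hmpos⟩
      obtain ⟨j, rfl⟩ : ∃ j, m = j + 1 := ⟨m - 1, by omega⟩
      exact hxU (Set.mem_iUnion.mpr ⟨j, hxA, hmpos⟩)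
    have : μ A ≤ 0 := by
      calc μ A ≤ μ (A ∩ ⋃ n, D n) + μ (A \ ⋃ n, D n) := measure_le_inter_add_diff μ A _
        _ ≤ μ (⋃ n, D n) + μ (A \ ⋃ n, D n) :=
            add_le_add_left (measure_mono Set.inter_subset_right) _
        _ = 0 := by rw [hDz, hdiff, add_zero]
    exact hA0.not_ge this
  have hDnfin : μ (D n) < ⊤ := (measure_mono Set.inter_subset_left).trans_lt hAfin
  have hDk : ∀ x ∈ D n, 0 < kiter κ (n + 1) x B := fun x hx => hx.2
  obtain ⟨m, F, hF0, hFm, hFpos, hFedge, hFend⟩ :=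
    path_aux μ ρ κ hmeas hdis hsym B hB n (D n) (hDmeas n) hDn0 hDnfin hDk
  refine ⟨m, fun i => if i = 0 then A else F i, by simp, ?_, ?_, ?_, ?_⟩
  · intro i
    by_cases h : i = 0 <;> simp [h, hA, hFm i]
  · intro i hi
    by_cases h : i = 0 <;> simp [h, hA0, hAfin, hFpos i hi]
  · intro i hi
    by_cases h : i = 0
    · subst h
      simp only [if_pos rfl, if_neg (Nat.one_ne_zero)]
      refine lt_of_lt_of_le (hFedge 0 hi) (measure_mono ?_)
      exact Set.prod_mono (hF0 ▸ Set.inter_subset_left) le_rfl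
    · simp only [if_neg h, if_neg (by omega : i + 1 ≠ 0)]
      exact hFedge i hi
  · by_cases h : m = 0
    · subst h
      simp only [if_pos rfl]
      refine lt_of_lt_of_le hFend (measure_mono ?_)
      exact Set.prod_mono (hF0 ▸ Set.inter_subset_left) le_rfl
    · simpa only [if_neg h] using hFend
end
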